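/- Let S be a compact metric space, U the closed unit ball of ℝ^k, and f : ℝ^{d₁} × S × U → ℝ^k a continuous map such that f(x,s,U) := {f(x,s,u) : u ∈ U} is convex for every (x,s) and such that, for some K > 0, ‖f(x,s,u)‖ ≤ K(1+‖x‖) for all (x,s,u). Define the set-valued map F : ℝ^{d₁} × S → {subsets of ℝ^k} by F(x,s) = f(x,s,U). Then for every Borel probability measure μ on ℝ^{d₁} × S with compact support, the Aumann integral ∫_{ℝ^{d₁}×S} F dμ equals the set { ∫_{ℝ^{d₁}×S×U} f(x,s,u) ν(dx,ds,du) : ν a Borel probability measure on ℝ^{d₁} × S × U whose marginal on ℝ^{d₁} × S equals μ }. -/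

import Mathlib

open MeasureTheory Metric Filter Topology
open scoped Pointwise NNReal ENNReal RealInnerProductSpace
open scoped ProbabilityTheory

abbrev Euc (n : ℕ) : Type := EuclideanSpace ℝ (Fin n)

/-- The Aumann integral of a set-valued map `G` with respect to a measure `μ`: the set of
integrals of `μ`-integrable measurable selections of `G`. -/
def aumannIntegral {W : Type*} [MeasurableSpace W] {E : Type*} [NormedAddCommGroup E]
    [NormedSpace ℝ E] [MeasurableSpace E] (μ : Measure W) (G : W → Set E) : Set E :=
  {v | ∃ g : W → E, Measurable g ∧ Integrable g μ ∧ (∀ w, g w ∈ G w) ∧ (∫ w, g w ∂μ) = v}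


section Selection
variable {W : Type*} [MeasurableSpace W]

/-- Measurability of the least witness. -/
lemma measurable_natInf {Q : ℕ → Set W} (hQ : ∀ i, MeasurableSet (Q i))
    (hex : ∀ w, ∃ i, w ∈ Q i) :
    Measurable (fun w => sInf {i | w ∈ Q i}) := by
  apply measurable_to_countable'
  intro i
  have : (fun w => sInf {i | w ∈ Q i}) ⁻¹' {i}
      = Q i ∩ ⋂ l ∈ Finset.range i, (Q l)ᶜ := by
    ext w
    simp only [Set.mem_preimage, Set.mem_singleton_iff, Set.mem_inter_iff, Set.mem_iInter,
      Set.mem_compl_iff, Finset.mem_range]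
    constructor
    · rintro rfl
      exact ⟨Nat.sInf_mem (hex w), fun l hl => Nat.notMem_of_lt_sInf hl⟩
    · rintro ⟨hi, hl⟩
      refine le_antisymm (Nat.sInf_le hi) ?_
      by_contra h
      push_neg at h
      exact hl _ h (Nat.sInf_mem (hex w))
  rw [this]
  exact (hQ i).inter (MeasurableSet.biInter (Set.to_countable _) fun l _ => (hQ l).compl)
end Selection

section Sel2
variable {W : Type*} [MeasurableSpace W] {Y : Type*} [MetricSpace Y] [CompactSpace Y]
  [MeasurableSpace Y] [BorelSpace Y] [SecondCountableTopology Y] [Nonempty Y]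
  {E : Type*} [MetricSpace E] [MeasurableSpace E] [OpensMeasurableSpace E]
  [SecondCountableTopology E]

/-- Filippov-type measurable selection theorem. -/
theorem exists_measurable_selection
    (φ : W → Y → E) (hφc : ∀ w, Continuous (φ w))
    (hφm : ∀ u, Measurable (fun w => φ w u))
    (g : W → E) (hg : Measurable g) (hsel : ∀ w, ∃ v, φ w v = g w) :
    ∃ u : W → Y, Measurable u ∧ ∀ w, φ w (u w) = g w := by
  classical
  obtain ⟨D, hD⟩ : ∃ D : ℕ → Y, DenseRange D := ⟨_, TopologicalSpace.denseRange_denseSeq Y⟩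
  set B : ℕ → ℕ → Set Y := fun j n => closedBall (D j) ((2⁻¹ : ℝ) ^ n) with hB
  have hBmem : ∀ j n, D j ∈ B j n := fun j n =>
    mem_closedBall_self (by positivity)
  -- countable dense subsets of the balls
  have he : ∀ j n, ∃ e : ℕ → Y, (∀ m, e m ∈ B j n) ∧
      ∀ v ∈ B j n, ∀ δ > 0, ∃ m, dist (e m) v < δ := by
    intro j n
    haveI : Nonempty (B j n) := ⟨⟨D j, hBmem j n⟩⟩
    refine ⟨fun m => (TopologicalSpace.denseSeq (B j n) m : Y),
      fun m => (TopologicalSpace.denseSeq (B j n) m).2, ?_⟩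
    intro v hv δ hδ
    obtain ⟨m, hm⟩ := Metric.denseRange_iff.mp
      (TopologicalSpace.denseRange_denseSeq (B j n)) ⟨v, hv⟩ δ hδ
    refine ⟨m, ?_⟩
    rw [dist_comm]
    simpa [Subtype.dist_eq] using hm
  choose e he1 he2 using he
  set P : ℕ → ℕ → Set W := fun j n =>
    ⋂ i : ℕ, ⋃ m : ℕ, {w | dist (φ w (e j n m)) (g w) < (2⁻¹ : ℝ) ^ i} with hP
  have hPmeas : ∀ j n, MeasurableSet (P j n) := by
    intro j n
    refine MeasurableSet.iInter fun i => MeasurableSet.iUnion fun m => ?_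
    exact measurableSet_lt ((hφm _).dist hg) measurable_const
  have hP1 : ∀ j n w, (∃ v ∈ B j n, φ w v = g w) → w ∈ P j n := by
    rintro j n w ⟨v, hv, hveq⟩
    refine Set.mem_iInter.2 fun i => ?_
    obtain ⟨δ, hδ, hδ'⟩ := Metric.continuous_iff.mp (hφc w) v ((2⁻¹ : ℝ) ^ i) (by positivity)
    obtain ⟨m, hm⟩ := he2 j n v hv δ hδ
    exact Set.mem_iUnion.2 ⟨m, by simpa [hveq] using hδ' _ hm⟩
  have hP2 : ∀ j n w, w ∈ P j n → ∃ v ∈ B j n, φ w v = g w := by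
    intro j n w hw
    have hch : ∀ i : ℕ, ∃ m, dist (φ w (e j n m)) (g w) < (2⁻¹ : ℝ) ^ i := by
      intro i
      have h := Set.mem_iInter.1 hw i
      rw [Set.mem_iUnion] at h
      exact h
    choose m hm using hch
    have hBc : IsCompact (B j n) := isClosed_closedBall.isCompact
    obtain ⟨v, hv, ψ, hψ, hψt⟩ := hBc.tendsto_subseq (fun i => he1 j n (m i))
    refine ⟨v, hv, ?_⟩
    have t1 : Tendsto (fun i => dist (φ w (e j n (m (ψ i)))) (g w)) atTop
        (𝓝 (dist (φ w v) (g w))) :=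
      (((hφc w).tendsto v).comp hψt).dist tendsto_const_nhds
    have t2 : Tendsto (fun i => dist (φ w (e j n (m (ψ i)))) (g w)) atTop (𝓝 0) := by
      refine squeeze_zero (fun i => dist_nonneg) (fun i => (hm (ψ i)).le) ?_
      exact (tendsto_pow_atTop_nhds_zero_of_lt_one (by norm_num) (by norm_num)).comp
        hψ.tendsto_atTop
    exact dist_eq_zero.mp (tendsto_nhds_unique t1 t2)
  -- base case
  have base : ∀ w, ∃ j, w ∈ P j 0 := by
    intro w
    obtain ⟨v, hv⟩ := hsel w
    obtain ⟨j, hj⟩ := Metric.denseRange_iff.mp hD v 1 one_pos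
    exact ⟨j, hP1 j 0 w ⟨v, by simpa [hB] using hj.le, hv⟩⟩
  -- inductive step
  have step : ∀ (n : ℕ) (b : W → ℕ), Measurable b → (∀ w, w ∈ P (b w) n) →
      ∃ b' : W → ℕ, Measurable b' ∧ (∀ w, w ∈ P (b' w) (n + 1)) ∧
        ∀ w, dist (D (b' w)) (D (b w)) ≤ (2⁻¹ : ℝ) ^ n + (2⁻¹ : ℝ) ^ (n + 1) := by
    intro n b hbm hbP
    set Q : ℕ → Set W := fun j => P j (n + 1) ∩
      (b ⁻¹' {i | dist (D j) (D i) ≤ (2⁻¹ : ℝ) ^ n + (2⁻¹ : ℝ) ^ (n + 1)}) with hQ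
    have hQmeas : ∀ j, MeasurableSet (Q j) := fun j =>
      (hPmeas j (n + 1)).inter (hbm (MeasurableSet.of_discrete))
    have hexQ : ∀ w, ∃ j, w ∈ Q j := by
      intro w
      obtain ⟨v, hv, hveq⟩ := hP2 (b w) n w (hbP w)
      obtain ⟨j, hj⟩ := Metric.denseRange_iff.mp hD v ((2⁻¹ : ℝ) ^ (n + 1)) (by positivity)
      refine ⟨j, hP1 j (n + 1) w ⟨v, by simpa [hB] using hj.le, hveq⟩, ?_⟩
      have h1 : dist (D j) v ≤ (2⁻¹ : ℝ) ^ (n + 1) := by rw [dist_comm]; exact hj.le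
      have h2 : dist v (D (b w)) ≤ (2⁻¹ : ℝ) ^ n := hv
      calc dist (D j) (D (b w)) ≤ dist (D j) v + dist v (D (b w)) := dist_triangle _ _ _
        _ ≤ (2⁻¹ : ℝ) ^ (n + 1) + (2⁻¹ : ℝ) ^ n := add_le_add h1 h2
        _ = (2⁻¹ : ℝ) ^ n + (2⁻¹ : ℝ) ^ (n + 1) := add_comm _ _
    refine ⟨fun w => sInf {j | w ∈ Q j}, measurable_natInf hQmeas hexQ, ?_, ?_⟩
    · exact fun w => (Nat.sInf_mem (hexQ w)).1
    · exact fun w => (Nat.sInf_mem (hexQ w)).2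
  choose step' hm' hP' hd' using step
  let bs : (n : ℕ) → {b : W → ℕ // Measurable b ∧ ∀ w, w ∈ P (b w) n} := fun n =>
    Nat.rec ⟨fun w => sInf {j | w ∈ P j 0},
        measurable_natInf (fun j => hPmeas j 0) base, fun w => Nat.sInf_mem (base w)⟩
      (fun n ih => ⟨step' n ih.1 ih.2.1 ih.2.2, hm' n ih.1 ih.2.1 ih.2.2,
        hP' n ih.1 ih.2.1 ih.2.2⟩) n
  set c : ℕ → W → Y := fun n w => D ((bs n).1 w) with hc
  have hdist : ∀ n w, dist (c (n + 1) w) (c n w) ≤ (2⁻¹ : ℝ) ^ n + (2⁻¹ : ℝ) ^ (n + 1) :=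
    fun n w => hd' n (bs n).1 (bs n).2.1 (bs n).2.2 w
  have hcmeas : ∀ n, Measurable (c n) := fun n => Measurable.of_discrete.comp (bs n).2.1
  have hcauchy : ∀ w, CauchySeq (fun n => c n w) := by
    intro w
    refine cauchySeq_of_le_geometric (2⁻¹ : ℝ) 2 (by norm_num) fun n => ?_
    rw [dist_comm]
    calc dist (c (n + 1) w) (c n w) ≤ (2⁻¹ : ℝ) ^ n + (2⁻¹ : ℝ) ^ (n + 1) := hdist n w
      _ ≤ 2 * (2⁻¹ : ℝ) ^ n := by
          rw [pow_succ]
          have ha : (0:ℝ) ≤ (2⁻¹ : ℝ) ^ n := by positivity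
          linarith
  have hlim : ∀ w, ∃ y, Tendsto (fun n => c n w) atTop (𝓝 y) := fun w =>
    cauchySeq_tendsto_of_complete (hcauchy w)
  choose u hu using hlim
  refine ⟨u, ?_, ?_⟩
  · exact measurable_of_tendsto_metrizable hcmeas (tendsto_pi_nhds.mpr hu)
  · intro w
    choose v hv1 hv2 using fun n => hP2 _ n w ((bs n).2.2 w)
    have hdv : ∀ n, dist (v n) (c n w) ≤ (2⁻¹ : ℝ) ^ n := fun n => hv1 n
    have htend : Tendsto v atTop (𝓝 (u w)) := by
      rw [tendsto_iff_dist_tendsto_zero]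
      have hb : Tendsto (fun n => (2⁻¹ : ℝ) ^ n + dist (c n w) (u w)) atTop (𝓝 0) := by
        have := (tendsto_pow_atTop_nhds_zero_of_lt_one (by norm_num : (0:ℝ) ≤ 2⁻¹)
          (by norm_num)).add (((hu w).dist (tendsto_const_nhds (x := u w))))
        simpa using this
      refine squeeze_zero (fun n => dist_nonneg) (fun n => ?_) hb
      calc dist (v n) (u w) ≤ dist (v n) (c n w) + dist (c n w) (u w) := dist_triangle _ _ _
        _ ≤ (2⁻¹ : ℝ) ^ n + dist (c n w) (u w) := by gcongr; exact hdv n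
    have t1 : Tendsto (fun n => φ w (v n)) atTop (𝓝 (φ w (u w))) :=
      ((hφc w).tendsto _).comp htend
    simp only [hv2] at t1
    exact tendsto_nhds_unique t1 tendsto_const_nhds
end Sel2

/-- For a continuous parametrization `f : ℝ^{d₁} × S × U → ℝ^k` with convex
images and linear growth in `x`, and any compactly supported Borel probability measure `μ` on
`ℝ^{d₁} × S`, the Aumann integral of `(x,s) ↦ f(x,s,U)` with respect to `μ` equals the set of
integrals `∫ f dν` over probability measures `ν` on `ℝ^{d₁} × S × U` whose marginal on
`ℝ^{d₁} × S` is `μ`. -/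
abbrev UB (k : ℕ) : Set (Euc k) := closedBall 0 1

set_option maxHeartbeats 1000000 in
theorem aumannIntegral_eq_param_integrals_compactSupport
    (d₁ k : ℕ) (hd₁ : 0 < d₁) (hk : 0 < k)
    (S : Type) [MetricSpace S] [CompactSpace S] [MeasurableSpace S] [BorelSpace S]
    (f : Euc d₁ → S → (closedBall (0 : Euc k) 1 : Set (Euc k)) → Euc k)
    (hf : Continuous (fun q : Euc d₁ × S × (closedBall (0 : Euc k) 1 : Set (Euc k)) =>
      f q.1 q.2.1 q.2.2))
    (hconv : ∀ (x : Euc d₁) (s : S), Convex ℝ (Set.range (f x s)))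
    (K : ℝ) (hK : 0 < K)
    (hbd : ∀ x s u, ‖f x s u‖ ≤ K * (1 + ‖x‖))
    (μ : Measure (Euc d₁ × S)) (hμ : IsProbabilityMeasure μ)
    (hsupp : ∃ Csupp : Set (Euc d₁ × S), IsCompact Csupp ∧ μ Csuppᶜ = 0) :
    aumannIntegral μ (fun p : Euc d₁ × S => Set.range (f p.1 p.2)) =
      {v : Euc k | ∃ ν : Measure (Euc d₁ × S × (closedBall (0 : Euc k) 1 : Set (Euc k))),
        IsProbabilityMeasure ν ∧
        ν.map (fun q => (q.1, q.2.1)) = μ ∧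
        (∫ q, f q.1 q.2.1 q.2.2 ∂ν) = v} := by
  classical
  show _ = {v : Euc k | ∃ ν : Measure (Euc d₁ × S × (UB k)), IsProbabilityMeasure ν ∧
        ν.map (fun q => (q.1, q.2.1)) = μ ∧ (∫ q, f q.1 q.2.1 q.2.2 ∂ν) = v}
  haveI hUcomp : CompactSpace (UB k) := isCompact_iff_compactSpace.mp (isCompact_closedBall _ _)
  haveI hUne : Nonempty (UB k) := ⟨⟨0, mem_closedBall_self zero_le_one⟩⟩
  haveI hUpol : PolishSpace (UB k) := IsClosed.polishSpace isClosed_closedBall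
  -- continuity facts
  have hfc : ∀ (w : Euc d₁ × S), Continuous (fun u : (UB k) => f w.1 w.2 u) := by
    intro w
    have h : (fun u : (UB k) => f w.1 w.2 u) =
        (fun q : Euc d₁ × S × (UB k) => f q.1 q.2.1 q.2.2) ∘ (fun u => (w.1, w.2, u)) := rfl
    rw [h]
    exact hf.comp (continuous_const.prodMk (continuous_const.prodMk continuous_id))
  have hfm : ∀ u : (UB k), Measurable (fun w : Euc d₁ × S => f w.1 w.2 u) := by
    intro u
    have h : (fun w : Euc d₁ × S => f w.1 w.2 u) =
        (fun q : Euc d₁ × S × (UB k) => f q.1 q.2.1 q.2.2) ∘ (fun w => (w.1, w.2, u)) := rfl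
    rw [h]
    exact (hf.comp (continuous_fst.prodMk (continuous_snd.prodMk continuous_const))).measurable
  ext v
  simp only [aumannIntegral, Set.mem_setOf_eq]
  constructor
  · rintro ⟨g, hgm, hgi, hgsel, hgint⟩
    obtain ⟨u, hum, hueq⟩ := exists_measurable_selection
      (fun (w : Euc d₁ × S) (y : (UB k)) => f w.1 w.2 y) hfc hfm g hgm
      (fun w => by obtain ⟨y, hy⟩ := hgsel w; exact ⟨y, hy⟩)
    set T : Euc d₁ × S → Euc d₁ × S × (UB k) := fun w => (w.1, w.2, u w) with hT
    have hTm : Measurable T := measurable_fst.prodMk (measurable_snd.prodMk hum)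
    have hπm : Measurable (fun q : Euc d₁ × S × (UB k) => (q.1, q.2.1)) :=
      measurable_fst.prodMk (measurable_fst.comp measurable_snd)
    refine ⟨μ.map T, Measure.isProbabilityMeasure_map hTm.aemeasurable, ?_, ?_⟩
    · rw [Measure.map_map hπm hTm]
      have : ((fun q : Euc d₁ × S × (UB k) => (q.1, q.2.1)) ∘ T) = id := rfl
      rw [this, Measure.map_id]
    · rw [integral_map hTm.aemeasurable hf.aestronglyMeasurable]
      rw [← hgint]
      refine integral_congr_ae (.of_forall fun w => ?_)
      show f w.1 w.2 (u w) = g w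
      exact hueq w
  · rintro ⟨ν, hν, hmarg, hint⟩
    set e : (Euc d₁ × S × (UB k)) ≃ᵐ ((Euc d₁ × S) × (UB k)) :=
      (MeasurableEquiv.prodAssoc).symm with he
    set ρ : Measure ((Euc d₁ × S) × (UB k)) := ν.map e with hρ
    haveI : IsProbabilityMeasure ρ := Measure.isProbabilityMeasure_map e.measurable.aemeasurable
    have hρfst : ρ.fst = μ := by
      rw [Measure.fst, hρ, Measure.map_map measurable_fst e.measurable]
      exact hmarg
    set κ := ρ.condKernel with hκ
    have hcomp : μ ⊗ₘ κ = ρ := by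
      rw [← hρfst, hκ]
      exact ρ.disintegrate ρ.condKernel
    -- bounds from compact support
    obtain ⟨C, hC, hCnull⟩ := hsupp
    obtain ⟨R, hR⟩ := (isBounded_iff_forall_norm_le).mp ((hC.image continuous_fst).isBounded)
    set M := K * (1 + R) with hM
    have hfb : ∀ p : (Euc d₁ × S) × (UB k), p.1 ∈ C → ‖f p.1.1 p.1.2 p.2‖ ≤ M := by
      intro p hp
      refine (hbd _ _ _).trans ?_
      have : ‖p.1.1‖ ≤ R := hR _ ⟨p.1, hp, rfl⟩
      rw [hM]; gcongr
    set F : (Euc d₁ × S) × (UB k) → Euc k := fun p => f p.1.1 p.1.2 p.2 with hF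
    have hFc : Continuous F :=
      hf.comp ((continuous_fst.comp continuous_fst).prodMk
        ((continuous_snd.comp continuous_fst).prodMk continuous_snd))
    have hρC : ρ (Prod.fst ⁻¹' Cᶜ) = 0 := by
      have hCm : MeasurableSet Cᶜ := hC.isClosed.measurableSet.compl
      rw [← Measure.fst_apply hCm, hρfst]
      exact hCnull
    have hFae : ∀ᵐ p ∂ρ, ‖F p‖ ≤ M := by
      refine (ae_iff).mpr (measure_mono_null ?_ hρC)
      intro p hp
      simp only [Set.mem_setOf_eq, not_le] at hp
      intro hpC
      exact absurd (hfb p hpC) (not_le.mpr hp)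
    have hFi : Integrable F ρ :=
      Integrable.mono' (integrable_const M) hFc.aestronglyMeasurable hFae
    set g : Euc d₁ × S → Euc k := fun w => ∫ y : (UB k), f w.1 w.2 y ∂(κ w) with hg
    have hgm : Measurable g :=
      (hFc.stronglyMeasurable.integral_kernel_prod_right').measurable
    have hgbd : ∀ w : Euc d₁ × S, ‖g w‖ ≤ K * (1 + ‖w.1‖) := by
      intro w
      haveI : IsProbabilityMeasure (κ w) := inferInstance
      have := norm_integral_le_of_norm_le_const
        (μ := κ w) (f := fun y : (UB k) => f w.1 w.2 y) (C := K * (1 + ‖w.1‖))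
        (.of_forall fun y => hbd _ _ y)
      simpa using this
    refine ⟨g, hgm, ?_, ?_, ?_⟩
    · refine Integrable.mono' (integrable_const M) hgm.aestronglyMeasurable ?_
      have hμC : ∀ᵐ w ∂μ, w ∈ C := by
        rw [ae_iff]
        exact hCnull
      filter_upwards [hμC] with w hw
      refine (hgbd w).trans ?_
      have : ‖w.1‖ ≤ R := hR _ ⟨w, hw, rfl⟩
      rw [hM]; gcongr
    · intro w
      haveI : IsProbabilityMeasure (κ w) := inferInstance
      have hcl : IsClosed (Set.range (f w.1 w.2)) := by
        have : IsCompact (Set.range (f w.1 w.2)) := isCompact_range (hfc w)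
        exact this.isClosed
      refine Convex.integral_mem (hconv w.1 w.2) hcl
        (Eventually.of_forall fun y => Set.mem_range_self y) ?_
      exact Integrable.mono' (integrable_const (K * (1 + ‖w.1‖)))
        (hfc w).aestronglyMeasurable (.of_forall fun y => hbd _ _ y)
    · have hFi' : Integrable F (μ ⊗ₘ κ) := by rw [hcomp]; exact hFi
      calc (∫ w, g w ∂μ) = ∫ p, F p ∂(μ ⊗ₘ κ) := (Measure.integral_compProd hFi').symm
        _ = ∫ p, F p ∂ρ := by rw [hcomp]
        _ = ∫ q, F (e q) ∂ν := by rw [hρ]; exact integral_map_equiv e F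
        _ = v := hint
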